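/- For all integers n ≥ 1 and 1 ≤ k ≤ n−1, the Dushnik–Miller dimension of the poset Q^n_{1,k} of subsets of {1,…,n} of cardinality 1 or k, ordered by inclusion, equals N(n, k+1), the minimum cardinality of a (k+1)-suitable set of permutations of {1,…,n}. -/

import Mathlib

/-- The Dushnik-Miller dimension of a poset `P`: the least `d` such that there is
an order embedding of `P` into `ℝ^d` with the componentwise order. -/
noncomputable def dimDM (P : Type*) [PartialOrder P] : ℕ :=
  sInf {d : ℕ | ∃ f : P → (Fin d → ℝ), ∀ a b : P, (f a ≤ f b ↔ a ≤ b)}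

/-- A set `S` of permutations of `{1,…,n}` (modelled as `Fin n`) is `k`-suitable if for
every pointed `k`-subset `(A, a)` there is `σ ∈ S` with `σ b ≤ σ a` for every `b ∈ A`. -/
def IsSuitable (n k : ℕ) (S : Finset (Equiv.Perm (Fin n))) : Prop :=
  ∀ A : Finset (Fin n), A.card = k → ∀ a ∈ A, ∃ σ ∈ S, ∀ b ∈ A, σ b ≤ σ a

/-- `N(n, k)`: the minimum cardinality of a `k`-suitable set of permutations of `{1,…,n}`. -/
noncomputable def suitableNumber (n k : ℕ) : ℕ :=
  sInf {m : ℕ | ∃ S : Finset (Equiv.Perm (Fin n)), IsSuitable n k S ∧ S.card = m}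

/-- sorting permutation (inverse) is strict on strict inequalities of values -/
lemma sort_inv_lt {n : ℕ} (v : Fin n → ℝ) {x y : Fin n} (h : v x < v y) :
    (Tuple.sort v)⁻¹ x < (Tuple.sort v)⁻¹ y := by
  by_contra h'
  push_neg at h'
  have hm := Tuple.monotone_sort v h'
  simp only [Function.comp_apply, Equiv.Perm.inv_def, Equiv.apply_symm_apply] at hm
  exact absurd hm (not_le.mpr h)

/-- From a `(k+1)`-suitable family one gets an embedding of `Q^n_{1,k}` into `ℝ^{|S|}`. -/
lemma embedding_of_suitable (n k : ℕ) (hk1 : 1 ≤ k) (hkn : k + 1 ≤ n)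
    (S : Finset (Equiv.Perm (Fin n))) (hS : IsSuitable n (k + 1) S) :
    ∃ f : {A : Finset (Fin n) // A.card = 1 ∨ A.card = k} → (Fin S.card → ℝ),
      ∀ a b, f a ≤ f b ↔ a ≤ b := by
  classical
  refine ⟨fun X i => ((X.1.sup fun a => ((S.equivFin.symm i : Equiv.Perm (Fin n)) a : ℕ) : ℕ) : ℝ),
    ?_⟩
  intro X Y
  constructor
  · -- hard direction: componentwise ≤ implies X.1 ⊆ Y.1
    intro hle
    by_contra hsub
    have hsub' : ¬ X.1 ⊆ Y.1 := hsub
    obtain ⟨x, hxX, hxY⟩ := Finset.not_subset.mp hsub'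
    -- extend Y.1 ∪ {x} to a set of size k+1
    have hYcard : Y.1.card ≤ k := by rcases Y.2 with h | h <;> omega
    have hins : (insert x Y.1).card ≤ k + 1 := by
      have := Finset.card_insert_le x Y.1; omega
    obtain ⟨B, hBsub, hBcard⟩ := Finset.exists_superset_card_eq hins
      (by simpa using hkn)
    obtain ⟨σ, hσS, hσmax⟩ := hS B hBcard x (hBsub (Finset.mem_insert_self x Y.1))
    set i := S.equivFin ⟨σ, hσS⟩ with hi
    have hsymm : (S.equivFin.symm i : Equiv.Perm (Fin n)) = σ := by
      rw [hi, Equiv.symm_apply_apply]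
    have hXge : (σ x : ℕ) ≤ X.1.sup fun a => ((σ a : ℕ)) := Finset.le_sup (f := fun a => ((σ a : ℕ))) hxX
    -- Y is nonempty
    obtain ⟨y0, hy0⟩ := Finset.card_pos.mp (by rcases Y.2 with h | h <;> omega : 0 < Y.1.card)
    have hylt : ∀ y ∈ Y.1, (σ y : ℕ) < (σ x : ℕ) := by
      intro y hy
      have hle' : σ y ≤ σ x := hσmax y (hBsub (Finset.mem_insert_of_mem hy))
      have hne : σ y ≠ σ x := fun hEq => hxY (by rwa [σ.injective hEq] at hy)
      exact lt_of_le_of_ne (Fin.le_def.mp hle') (fun hEq => hne (Fin.val_injective hEq))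
    have hpos : 0 < (σ x : ℕ) := (Nat.zero_le _).trans_lt (hylt y0 hy0)
    have hYlt : (Y.1.sup fun a => ((σ a : ℕ))) < (σ x : ℕ) := by
      rw [Finset.sup_lt_iff hpos]
      exact hylt
    have := hle i
    simp only [hsymm] at this
    have hnat : (X.1.sup fun a => ((σ a : ℕ))) ≤ Y.1.sup fun a => ((σ a : ℕ)) := by
      exact_mod_cast this
    omega
  · intro hXY i
    have : (X.1.sup fun a => ((S.equivFin.symm i : Equiv.Perm (Fin n)) a : ℕ))
        ≤ Y.1.sup fun a => ((S.equivFin.symm i : Equiv.Perm (Fin n)) a : ℕ) :=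
      Finset.sup_mono hXY
    exact Nat.cast_le.mpr this

/-- `dim(Q^n_{1,k}) = N(n, k+1)` for `1 ≤ k ≤ n - 1`. -/
theorem dimDM_oneOrK_eq_suitableNumber (n k : ℕ) (hn : 1 ≤ n) (hk1 : 1 ≤ k)
    (hk2 : k ≤ n - 1) :
    dimDM {A : Finset (Fin n) // A.card = 1 ∨ A.card = k} = suitableNumber n (k + 1) := by
  classical
  have hkn : k + 1 ≤ n := by omega
  -- the universal family of permutations is suitable
  have hu : IsSuitable n (k + 1) Finset.univ := by
    intro A hA a ha
    refine ⟨Equiv.swap a ⟨n - 1, by omega⟩, Finset.mem_univ _, ?_⟩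
    intro b hb
    have htop : ∀ c : Fin n, c ≤ ⟨n - 1, by omega⟩ := by
      intro c; rw [Fin.le_def]; have := c.isLt; simp; omega
    have : Equiv.swap a ⟨n - 1, by omega⟩ a = ⟨n - 1, by omega⟩ := Equiv.swap_apply_left _ _
    rw [this]
    exact htop _
  -- the dimension set is nonempty
  obtain ⟨f0, hf0⟩ := embedding_of_suitable n k hk1 hkn Finset.univ hu
  have hdne : {d : ℕ | ∃ f : {A : Finset (Fin n) // A.card = 1 ∨ A.card = k} → (Fin d → ℝ),
      ∀ a b, f a ≤ f b ↔ a ≤ b}.Nonempty := ⟨_, f0, hf0⟩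
  have hNne : {m : ℕ | ∃ S : Finset (Equiv.Perm (Fin n)),
      IsSuitable n (k + 1) S ∧ S.card = m}.Nonempty := ⟨_, Finset.univ, hu, rfl⟩
  apply le_antisymm
  · -- dim ≤ N : take an optimal suitable family
    obtain ⟨S0, hS0, hS0card⟩ := Nat.sInf_mem hNne
    obtain ⟨f, hf⟩ := embedding_of_suitable n k hk1 hkn S0 hS0
    calc dimDM {A : Finset (Fin n) // A.card = 1 ∨ A.card = k} ≤ S0.card :=
          Nat.sInf_le ⟨f, hf⟩
      _ = suitableNumber n (k + 1) := hS0card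
  · -- N ≤ dim : take an optimal embedding and sort coordinates
    obtain ⟨f, hf⟩ := Nat.sInf_mem hdne
    set d := dimDM {A : Finset (Fin n) // A.card = 1 ∨ A.card = k} with hd
    set v : Fin d → Fin n → ℝ :=
      fun i x => f ⟨{x}, Or.inl (Finset.card_singleton x)⟩ i with hv
    set S : Finset (Equiv.Perm (Fin n)) :=
      Finset.image (fun i => (Tuple.sort (v i))⁻¹) Finset.univ with hSdef
    have hsuit : IsSuitable n (k + 1) S := by
      intro B hB b hb
      set A := B.erase b with hA
      have hAcard : A.card = k := by
        rw [hA, Finset.card_erase_of_mem hb, hB]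
        omega
      set XA : {A : Finset (Fin n) // A.card = 1 ∨ A.card = k} := ⟨A, Or.inr hAcard⟩
      set Xb : {A : Finset (Fin n) // A.card = 1 ∨ A.card = k} :=
        ⟨{b}, Or.inl (Finset.card_singleton b)⟩
      have hnot : ¬ (Xb ≤ XA) := by
        intro h
        have : b ∈ A := h (Finset.mem_singleton_self b)
        exact (Finset.notMem_erase b B) this
      have : ¬ f Xb ≤ f XA := fun h => hnot ((hf Xb XA).mp h)
      rw [Pi.le_def, not_forall] at this
      obtain ⟨i, hi⟩ := this
      rw [not_le] at hi
      refine ⟨(Tuple.sort (v i))⁻¹, Finset.mem_image_of_mem _ (Finset.mem_univ i), ?_⟩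
      intro b' hb'
      rcases eq_or_ne b' b with rfl | hne
      · exact le_rfl
      · have hb'A : b' ∈ A := Finset.mem_erase.mpr ⟨hne, hb'⟩
        have h1 : v i b' ≤ f XA i := by
          have hle : (⟨{b'}, Or.inl (Finset.card_singleton b')⟩ :
              {A : Finset (Fin n) // A.card = 1 ∨ A.card = k}) ≤ XA := by
            exact Finset.singleton_subset_iff.mpr hb'A
          exact (hf _ XA).mpr hle i
        have h2 : v i b' < v i b := lt_of_le_of_lt h1 hi
        exact le_of_lt (sort_inv_lt (v i) h2)
    calc suitableNumber n (k + 1) ≤ S.card := Nat.sInf_le ⟨S, hsuit, rfl⟩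
      _ ≤ (Finset.univ : Finset (Fin d)).card := Finset.card_image_le
      _ = d := by simp
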